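/- Let M ≥ 1 be an integer and let Z_1, …, Z_M be real random variables on a common probability space such that each Z_k has the Gamma(2,1) distribution (no independence is assumed). Then for every t ≥ 0, P( max_{k=1,…,M} Z_k ≥ log M + log log(eM) + t ) ≤ (2 + t) e^{−t}. -/

import Mathlib

open MeasureTheory ProbabilityTheory Real Set Filter

lemma gamma_two_one_tail (c : ℝ) (hc : 0 ≤ c) :
    gammaMeasure 2 1 {x | c ≤ x} = ENNReal.ofReal ((1 + c) * Real.exp (-c)) := by
  have hs : {x : ℝ | c ≤ x} = Ici c := rfl
  have hF : ∀ x ∈ Ici c, HasDerivAt (fun y => -(1 + y) * Real.exp (-y))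
      (x * Real.exp (-x)) x := by
    intro x _
    have h1 : HasDerivAt (fun y : ℝ => -(1 + y)) (-1) x := by
      exact ((hasDerivAt_id x).const_add 1).neg
    have h2 : HasDerivAt (fun y : ℝ => Real.exp (-y)) (-Real.exp (-x)) x := by
      have := (hasDerivAt_neg x).exp; rwa [mul_neg_one] at this
    exact (h1.mul h2).congr_deriv (by ring)
  have hnonneg : ∀ x ∈ Ici c, 0 ≤ x * Real.exp (-x) := fun x hx =>
    mul_nonneg (hc.trans hx) (Real.exp_pos _).le
  have htend : Tendsto (fun y => -(1 + y) * Real.exp (-y)) atTop (nhds 0) := by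
    have h1 := Real.tendsto_exp_neg_atTop_nhds_zero
    have h2 := Real.tendsto_pow_mul_exp_neg_atTop_nhds_zero 1
    have := ((h1.add h2).neg)
    simp only [neg_zero, add_zero] at this
    refine this.congr fun y => ?_
    ring
  have hnn := fun x (hx : x ∈ Ioi c) => hnonneg x (le_of_lt (mem_Ioi.mp hx))
  have hd := fun x (hx : x ∈ Ici c) => hF x hx
  have hint : ∫ x in Ioi c, x * Real.exp (-x)
      = 0 - (-(1 + c) * Real.exp (-c)) :=
    integral_Ioi_of_hasDerivAt_of_nonneg' hd hnn htend
  have hintOn : IntegrableOn (fun x => x * Real.exp (-x)) (Ioi c) :=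
    integrableOn_Ioi_deriv_of_nonneg' hd hnn htend
  rw [gammaMeasure, hs, withDensity_apply _ measurableSet_Ici]
  have hIoi : ∫⁻ x in Ici c, gammaPDF 2 1 x = ∫⁻ x in Ioi c, gammaPDF 2 1 x :=
    (setLIntegral_congr Ioi_ae_eq_Ici).symm
  rw [hIoi]
  have hpdf : ∀ x ∈ Ioi c, gammaPDF 2 1 x = ENNReal.ofReal (x * Real.exp (-x)) := by
    intro x hx
    rw [gammaPDF_of_nonneg (hc.trans hx.le)]
    norm_num [Real.Gamma_two, Real.one_rpow, Real.rpow_one]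
  rw [setLIntegral_congr_fun measurableSet_Ioi hpdf]
  rw [← ofReal_integral_eq_lintegral_ofReal hintOn
    ((ae_restrict_iff' measurableSet_Ioi).mpr (ae_of_all _ hnn))]
  rw [hint]; ring_nf

/-- If `Z_1, …, Z_M` (`M ≥ 1`) are real random variables, each `Γ(2,1)`-distributed
(no independence assumed), then for every `t ≥ 0`,
`P(max_k Z_k ≥ log M + log log (e M) + t) ≤ (2 + t) e^{-t}`. -/
theorem max_gamma_tail_bound {Ω : Type*} [MeasurableSpace Ω] (P : Measure Ω)
    [IsProbabilityMeasure P] (M : ℕ) (hM : 1 ≤ M) (Z : Fin M → Ω → ℝ)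
    (hmeas : ∀ k, Measurable (Z k))
    (hgamma : ∀ k, Measure.map (Z k) P = gammaMeasure 2 1) (t : ℝ) (ht : 0 ≤ t) :
    P {ω | Real.log M + Real.log (Real.log (Real.exp 1 * M)) + t ≤
        Finset.univ.sup' (Finset.univ_nonempty_iff.mpr
          (Fin.pos_iff_nonempty.mp (by omega))) (fun k => Z k ω)}
      ≤ ENNReal.ofReal ((2 + t) * Real.exp (-t)) := by
  have hMpos : (0 : ℝ) < M := by exact_mod_cast hM
  have hM1 : (1 : ℝ) ≤ M := by exact_mod_cast hM
  set L : ℝ := Real.log (Real.exp 1 * M) with hLdef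
  have hLeq : L = 1 + Real.log M := by
    rw [hLdef, Real.log_mul (Real.exp_pos 1).ne' hMpos.ne', Real.log_exp]
  have hlogM : 0 ≤ Real.log M := Real.log_nonneg hM1
  have hL1 : 1 ≤ L := by rw [hLeq]; linarith
  have hLpos : 0 < L := lt_of_lt_of_le one_pos hL1
  have hlogL : 0 ≤ Real.log L := Real.log_nonneg hL1
  set c : ℝ := Real.log M + Real.log L + t with hcdef
  have hc : 0 ≤ c := by positivity
  -- union bound
  have hsub : {ω | c ≤ Finset.univ.sup' (Finset.univ_nonempty_iff.mpr
      (Fin.pos_iff_nonempty.mp (by omega))) (fun k => Z k ω)}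
      ⊆ ⋃ k, Z k ⁻¹' {x | c ≤ x} := by
    intro ω hω
    simp only [Set.mem_setOf_eq, Finset.le_sup'_iff] at hω
    obtain ⟨k, -, hk⟩ := hω
    exact Set.mem_iUnion.mpr ⟨k, hk⟩
  calc P _ ≤ P (⋃ k, Z k ⁻¹' {x | c ≤ x}) := measure_mono hsub
    _ ≤ ∑' k, P (Z k ⁻¹' {x | c ≤ x}) := measure_iUnion_le _
    _ = ∑' k : Fin M, ENNReal.ofReal ((1 + c) * Real.exp (-c)) := by
        congr 1; ext k
        have hIci : {x : ℝ | c ≤ x} = Ici c := rfl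
        rw [hIci, ← Measure.map_apply (hmeas k) measurableSet_Ici, hgamma k]
        exact gamma_two_one_tail c hc
    _ = (M : ENNReal) * ENNReal.ofReal ((1 + c) * Real.exp (-c)) := by
        rw [tsum_fintype, Finset.sum_const, Finset.card_univ, Fintype.card_fin,
          nsmul_eq_mul]
    _ = ENNReal.ofReal ((M : ℝ) * ((1 + c) * Real.exp (-c))) := by
        rw [ENNReal.ofReal_mul hMpos.le, ENNReal.ofReal_natCast]
    _ ≤ ENNReal.ofReal ((2 + t) * Real.exp (-t)) := by
        apply ENNReal.ofReal_le_ofReal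
        have hexp : Real.exp (-c) = (M : ℝ)⁻¹ * L⁻¹ * Real.exp (-t) := by
          rw [hcdef, neg_add, neg_add, Real.exp_add, Real.exp_add,
            Real.exp_neg, Real.exp_neg, Real.exp_log hMpos, Real.exp_log hLpos]
        rw [hexp]
        have h1c : 1 + c ≤ (2 + t) * L := by
          have hlog_le : Real.log L ≤ L - 1 := Real.log_le_sub_one_of_pos hLpos
          have : 1 + c = L + Real.log L + t := by rw [hcdef, hLeq]; ring
          nlinarith
        have key : (M : ℝ) * ((1 + c) * ((M : ℝ)⁻¹ * L⁻¹ * Real.exp (-t)))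
            = (1 + c) * L⁻¹ * Real.exp (-t) := by
          field_simp
        rw [key]
        have hdiv : (1 + c) * L⁻¹ ≤ (2 + t) := by
          have := (div_le_iff₀ hLpos).mpr h1c
          calc (1 + c) * L⁻¹ = (1 + c) / L := by ring
            _ ≤ 2 + t := by rw [div_le_iff₀ hLpos]; linarith [h1c]
        nlinarith [Real.exp_pos (-t), hdiv]
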